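/- Grade the polynomial ring A = 𝔽₂[ξ₁, ξ₂, ξ₃, …] by assigning ξᵢ degree 2^i − 1. If p ∈ A is homogeneous of degree j ≠ 0 and φ(p) lies in the power series subring 𝔽₂[χ₁, χ₂, …][[z]] ⊆ 𝔽₂[χ₁, χ₂, …]((z)) (i.e., the coefficient of zⁿ in φ(p) vanishes for every n < 0), then p = 0. Consequently the map (q, p) ↦ q + φ(p) from 𝔽₂[χ₁, χ₂, …][[z]] ⊕ A to 𝔽₂[χ₁, χ₂, …]((z)) is injective on homogeneous elements of nonzero degree. -/

import Mathlib

/-!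
STATEMENT 1: Grading `𝔽₂[ξ₁, ξ₂, …]` by `deg ξᵢ = 2^i − 1`, if `p` is homogeneous of degree
`j ≠ 0` and `φ(p)` has no negative-degree Laurent coefficients, then `p = 0`; consequently
`(q, p) ↦ q + φ(p)` is injective on homogeneous elements of nonzero degree.

Here `X i` stands for `ξ_{i+1}` (resp. `χ_{i+1}`), `φ(ξᵢ) = χᵢ·z^{2^i−1} + χ_{i−1}·z^{−1}`
with `χ₀ = 1`, and `HahnSeries.single n c` is `c·zⁿ` in `LaurentSeries = HahnSeries ℤ`.
-/

open MvPolynomial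

noncomputable section

/-- `chi 0 = 1` (the convention `χ₀ = 1`) and `chi (i+1)` is the variable `χ_{i+1}`. -/
def chi : ℕ → MvPolynomial ℕ (ZMod 2)
  | 0 => 1
  | i + 1 => X i

abbrev A2 := MvPolynomial ℕ (ZMod 2)

/-- The power-series "unit part" of the image of a generator. -/
def G (i : ℕ) : PowerSeries A2 :=
  PowerSeries.C (chi i) + PowerSeries.monomial (2 ^ (i + 1)) (chi (i + 1))

/-- The image of the generator `X i` under `φ`. -/
def fgen (i : ℕ) : LaurentSeries A2 :=
  HahnSeries.single ((2 ^ (i + 1) : ℤ) - 1) (chi (i + 1)) + HahnSeries.single (-1 : ℤ) (chi i)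

lemma ofPS_monomial (n : ℕ) (a : A2) :
    HahnSeries.ofPowerSeries ℤ A2 (PowerSeries.monomial n a) = HahnSeries.single (n : ℤ) a := by
  have : PowerSeries.monomial n a = PowerSeries.C a * PowerSeries.X ^ n := by
    rw [PowerSeries.X_pow_eq]
    ext k
    simp [PowerSeries.coeff_monomial, PowerSeries.coeff_C_mul]
  rw [this, map_mul, HahnSeries.ofPowerSeries_C, HahnSeries.ofPowerSeries_X_pow,
    HahnSeries.C_apply, HahnSeries.single_mul_single, zero_add, mul_one]

lemma constantCoeff_G (i : ℕ) : PowerSeries.constantCoeff (G i) = chi i := by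
  simp only [G, map_add, PowerSeries.constantCoeff_C]
  rw [← PowerSeries.coeff_zero_eq_constantCoeff_apply, PowerSeries.coeff_monomial,
    if_neg (pow_pos (by norm_num : (0:ℕ) < 2) (i+1)).ne, add_zero]

lemma fgen_eq (i : ℕ) :
    fgen i = HahnSeries.single (-1 : ℤ) 1 * HahnSeries.ofPowerSeries ℤ A2 (G i) := by
  rw [G, map_add, HahnSeries.ofPowerSeries_C, ofPS_monomial, mul_add, HahnSeries.C_apply,
    HahnSeries.single_mul_single, HahnSeries.single_mul_single, one_mul, one_mul, fgen, add_comm]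
  norm_num
  ring_nf

lemma ofPS_coeff_neg (x : PowerSeries A2) (n : ℤ) (hn : n < 0) :
    (HahnSeries.ofPowerSeries ℤ A2 x).coeff n = 0 := by
  rw [HahnSeries.ofPowerSeries_apply]
  refine HahnSeries.embDomain_of_notMem_range ?_
  rintro ⟨m, rfl⟩
  simp at hn
  omega

lemma ofPS_coeff_zero (x : PowerSeries A2) :
    (HahnSeries.ofPowerSeries ℤ A2 x).coeff (0 : ℤ) = PowerSeries.constantCoeff x := by
  have := HahnSeries.ofPowerSeries_apply_coeff (Γ := ℤ) x 0
  simpa using this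

lemma prod_fgen (s : Finset ℕ) (α : ℕ → ℕ) :
    ∏ i ∈ s, fgen i ^ α i
      = HahnSeries.single (-(∑ i ∈ s, α i : ℕ) : ℤ) 1 *
        HahnSeries.ofPowerSeries ℤ A2 (∏ i ∈ s, G i ^ α i) := by
  induction s using Finset.induction with
  | empty => simp
  | @insert a t ha ih =>
    rw [Finset.prod_insert ha, ih, Finset.prod_insert ha, Finset.sum_insert ha, fgen_eq,
      mul_pow, HahnSeries.single_pow, one_pow, map_mul, map_pow]
    have h1 : (-(α a + ∑ i ∈ t, α i : ℕ) : ℤ) = (α a • (-1 : ℤ)) + (-(∑ i ∈ t, α i : ℕ) : ℤ) := by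
      push_cast; ring
    have h2 : HahnSeries.single ((α a • (-1:ℤ)) + (-(∑ i ∈ t, α i : ℕ) : ℤ)) (1 : A2)
        = HahnSeries.single (α a • (-1:ℤ)) (1:A2) *
          HahnSeries.single (-(∑ i ∈ t, α i : ℕ) : ℤ) (1:A2) := by
      rw [HahnSeries.single_mul_single, mul_one]
    rw [h1, h2]
    ring

lemma phi_monomial (α : ℕ →₀ ℕ) :
    (aeval fgen) (monomial α (1 : ZMod 2)) =
      HahnSeries.single (-(α.sum fun _ k => k) : ℤ) 1 *
        HahnSeries.ofPowerSeries ℤ A2 (α.prod fun i k => G i ^ k) := by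
  rw [aeval_monomial, map_one, one_mul, Finsupp.prod, Finsupp.prod, Finsupp.sum, prod_fgen]

lemma coeff_phi_monomial (α : ℕ →₀ ℕ) (m : ℕ) (hm : (α.sum fun _ k => k) ≤ m) :
    ((aeval fgen) (monomial α (1 : ZMod 2))).coeff (-(m : ℤ)) =
      if (α.sum fun _ k => k) = m then α.prod (fun i k => chi i ^ k) else 0 := by
  rw [phi_monomial]
  set s := (α.sum fun _ k => k) with hs
  have h1 : (-(m : ℤ)) = ((s : ℤ) - m) + (-(s : ℤ)) := by ring
  rw [h1, HahnSeries.coeff_single_mul_add, one_mul]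
  by_cases h : s = m
  · rw [if_pos h, h, sub_self, ofPS_coeff_zero, map_finsuppProd]
    exact Finsupp.prod_congr fun i _ => by rw [map_pow, constantCoeff_G]
  · rw [if_neg h, ofPS_coeff_neg]
    have : s < m := lt_of_le_of_ne hm h
    omega

/-- The exponent multi-index of the "bottom" coefficient monomial: shift down by one,
dropping the exponent of `ξ₁` (index `0`). -/
def gam (α : ℕ →₀ ℕ) : ℕ →₀ ℕ :=
  α.sum fun i k => if i = 0 then 0 else Finsupp.single (i - 1) k

lemma gam_apply (α : ℕ →₀ ℕ) (j : ℕ) : gam α j = α (j + 1) := by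
  rw [gam, Finsupp.sum, Finsupp.finset_sum_apply]
  rw [Finset.sum_eq_single (j + 1)]
  · simp [Finsupp.single_apply]
  · intro i hi hne
    by_cases h0 : i = 0
    · simp [h0]
    · rw [if_neg h0, Finsupp.single_apply, if_neg (by omega)]
  · intro h
    simp [Finsupp.notMem_support_iff.mp h]

lemma gam_inj (α α' : ℕ →₀ ℕ) (h : gam α = gam α')
    (hsum : (α.sum fun _ k => k) = (α'.sum fun _ k => k)) : α = α' := by
  have hsucc : ∀ j, α (j + 1) = α' (j + 1) := by
    intro j; rw [← gam_apply, ← gam_apply, h]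
  set M := (α.support ∪ α'.support).sup id with hM
  have hss : ∀ β : ℕ →₀ ℕ, β.support ⊆ α.support ∪ α'.support →
      (β.sum fun _ k => k) = ∑ i ∈ Finset.range (M + 1), β i := by
    intro β hβ
    rw [Finsupp.sum_of_support_subset β _ _ (fun i _ => rfl)]
    intro i hi
    have : i ≤ M := Finset.le_sup (f := id) (hβ hi)
    exact Finset.mem_range.mpr (by omega)
  have h1 := hss α Finset.subset_union_left
  have h2 := hss α' Finset.subset_union_right
  rw [h1, h2, Finset.sum_range_succ', Finset.sum_range_succ'] at hsum
  have h0 : α 0 = α' 0 := by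
    have : ∑ i ∈ Finset.range M, α (i + 1) = ∑ i ∈ Finset.range M, α' (i + 1) :=
      Finset.sum_congr rfl fun i _ => hsucc i
    omega
  ext i
  cases i with
  | zero => exact h0
  | succ j => exact hsucc j

lemma prod_chi_eq (α : ℕ →₀ ℕ) :
    α.prod (fun i k => chi i ^ k) = monomial (gam α) (1 : ZMod 2) := by
  induction α using Finsupp.induction with
  | zero => simp [gam]
  | single_add a b f ha hb ih =>
    have hprod : (Finsupp.single a b + f).prod (fun i k => chi i ^ k)
        = chi a ^ b * f.prod (fun i k => chi i ^ k) := by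
      rw [Finsupp.prod_add_index' (fun i => pow_zero _) (fun i k l => pow_add _ _ _)]
      congr 1
      exact Finsupp.prod_single_index (pow_zero _)
    have hgam : gam (Finsupp.single a b + f)
        = (if a = 0 then 0 else Finsupp.single (a - 1) b) + gam f := by
      rw [gam, gam, Finsupp.sum_add_index' (fun i => by simp) (fun i k l => by split <;> simp),
        Finsupp.sum_single_index (by simp)]
    rw [hprod, hgam, ih, ← one_mul (1 : ZMod 2), ← monomial_mul]
    congr 1
    · cases a with
      | zero => simp [chi]
      | succ i => simp [chi, X_pow_eq_monomial]

lemma coeff_sum' {σ : Type*} [DecidableEq σ] (s : Finset σ) (f : σ → LaurentSeries A2) (n : ℤ) :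
    (∑ i ∈ s, f i).coeff n = ∑ i ∈ s, (f i).coeff n := by
  induction s using Finset.induction with
  | empty => simp
  | @insert a t ha ih => rw [Finset.sum_insert ha, Finset.sum_insert ha, HahnSeries.coeff_add, ih]

lemma key (p : A2) (hp : p ≠ 0) (h0 : ∀ α ∈ p.support, α ≠ 0) :
    ∃ n : ℤ, n < 0 ∧ ((aeval fgen) p).coeff n ≠ 0 := by
  set m := p.totalDegree with hm
  obtain ⟨α₀, hα₀, hα₀m⟩ : ∃ α ∈ p.support, (α.sum fun _ k => k) = m := by
    obtain ⟨α, hα, hval⟩ := Finset.exists_mem_eq_sup p.support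
      (support_nonempty.mpr hp) (fun α : ℕ →₀ ℕ => α.sum fun _ k => k)
    exact ⟨α, hα, hval.symm⟩
  have hm1 : 1 ≤ m := by
    obtain ⟨i, hi⟩ := Finsupp.support_nonempty_iff.mpr (h0 α₀ hα₀)
    have h1 : α₀ i ≤ (α₀.sum fun _ k => k) :=
      Finset.single_le_sum (f := fun j => α₀ j) (fun _ _ => Nat.zero_le _) hi
    have h2 : 1 ≤ α₀ i := Nat.one_le_iff_ne_zero.mpr (Finsupp.mem_support_iff.mp hi)
    omega
  refine ⟨-(m : ℤ), by exact_mod_cast Int.neg_neg_of_pos (by exact_mod_cast hm1), ?_⟩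
  have hps : p = ∑ α ∈ p.support, monomial α 1 := by
    conv_lhs => rw [p.as_sum]
    refine Finset.sum_congr rfl fun α hα => ?_
    have h1 : coeff α p = 1 := by
      have h2 := mem_support_iff.mp hα
      revert h2; generalize coeff α p = c; revert c; decide
    rw [h1]
  rw [hps, map_sum, coeff_sum']
  have hterm : ∀ α ∈ p.support, ((aeval fgen) (monomial α (1 : ZMod 2))).coeff (-(m : ℤ)) =
      if (α.sum fun _ k => k) = m then monomial (gam α) (1 : ZMod 2) else 0 := by
    intro α hα
    rw [coeff_phi_monomial α m (le_totalDegree hα), prod_chi_eq]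
  rw [Finset.sum_congr rfl hterm, ← Finset.sum_filter]
  set S := p.support.filter (fun α => (α.sum fun _ k => k) = m) with hS
  have hα₀S : α₀ ∈ S := Finset.mem_filter.mpr ⟨hα₀, hα₀m⟩
  intro hzero
  have hc := congrArg (coeff (gam α₀)) hzero
  rw [MvPolynomial.coeff_sum, MvPolynomial.coeff_zero] at hc
  rw [Finset.sum_eq_single α₀ (fun α hα hne => ?_) (fun h => absurd hα₀S h)] at hc
  · rw [coeff_monomial, if_pos rfl] at hc
    exact one_ne_zero hc
  · rw [coeff_monomial, if_neg]
    intro hg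
    exact hne (gam_inj α α₀ hg (by
      rw [(Finset.mem_filter.mp hα).2, hα₀m]))

theorem stmt_1
    (φ : MvPolynomial ℕ (ZMod 2) →ₐ[ZMod 2] LaurentSeries (MvPolynomial ℕ (ZMod 2)))
    (hφ : ∀ i : ℕ, φ (X i) =
      HahnSeries.single ((2 ^ (i + 1) : ℤ) - 1) (chi (i + 1)) +
        HahnSeries.single (-1 : ℤ) (chi i)) :
    (∀ (p : MvPolynomial ℕ (ZMod 2)) (j : ℕ), j ≠ 0 →
      MvPolynomial.IsWeightedHomogeneous (fun i : ℕ => 2 ^ (i + 1) - 1) p j →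
      (∀ n : ℤ, n < 0 → (φ p).coeff n = 0) → p = 0) ∧
    (∀ (q q' : LaurentSeries (MvPolynomial ℕ (ZMod 2)))
        (p p' : MvPolynomial ℕ (ZMod 2)) (j : ℕ), j ≠ 0 →
      (∀ n : ℤ, n < 0 → q.coeff n = 0) → (∀ n : ℤ, n < 0 → q'.coeff n = 0) →
      MvPolynomial.IsWeightedHomogeneous (fun i : ℕ => 2 ^ (i + 1) - 1) p j →
      MvPolynomial.IsWeightedHomogeneous (fun i : ℕ => 2 ^ (i + 1) - 1) p' j →
      q + φ p = q' + φ p' → q = q' ∧ p = p') := by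
  have hphi : φ = aeval fgen := by
    apply MvPolynomial.algHom_ext
    intro i
    rw [aeval_X]
    exact (hφ i).trans rfl
  have part1 : ∀ (p : MvPolynomial ℕ (ZMod 2)) (j : ℕ), j ≠ 0 →
      MvPolynomial.IsWeightedHomogeneous (fun i : ℕ => 2 ^ (i + 1) - 1) p j →
      (∀ n : ℤ, n < 0 → (φ p).coeff n = 0) → p = 0 := by
    intro p j hj hhom hcoeff
    by_contra hp
    rw [hphi] at hcoeff
    obtain ⟨n, hn, hne⟩ := key p hp (by
      intro α hα hα0
      have hd := hhom (mem_support_iff.mp hα)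
      rw [hα0, map_zero] at hd
      exact hj hd.symm)
    exact hne (hcoeff n hn)
  refine ⟨part1, ?_⟩
  intro q q' p p' j hj hq hq' hh hh' heq
  have hs : p = p' := by
    refine sub_eq_zero.mp (part1 (p - p') j hj ?_ ?_)
    · exact (mem_weightedHomogeneousSubmodule _ _ _ _).mp
        (sub_mem ((mem_weightedHomogeneousSubmodule _ _ _ _).mpr hh)
          ((mem_weightedHomogeneousSubmodule _ _ _ _).mpr hh'))
    · intro n hn
      have h2 : φ (p - p') = q' - q := by
        rw [map_sub]
        linear_combination heq
      rw [h2, HahnSeries.coeff_sub, hq' n hn, hq n hn, sub_zero]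
  subst hs
  exact ⟨add_right_cancel heq, rfl⟩

end
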